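/- Let A be a real n×m matrix. Then A has rank r and det(UᵀAV) ≠ 0 if and only if there exist X ∈ ℝ^{(n−r)×r}, Y ∈ ℝ^{(m−r)×r} and an invertible H ∈ ℝ^{r×r} such that A = (U + U_⊥X)·H·(V + V_⊥Y)ᵀ. Moreover, in that case the triple (X, Y, H) is unique and is given explicitly by H = U⁺A(V⁺)ᵀ, X = U_⊥⁺A(V⁺)ᵀ·H⁻¹, and Y = V_⊥⁺Aᵀ(U⁺)ᵀ·(Hᵀ)⁻¹; that is, the chart θ_Z : 𝒰_Z → ℝ^{(n−r)×r} × ℝ^{(m−r)×r} × GL_r is a bijection, where 𝒰_Z := {A ∈ ℝ^{n×m} : rank A = r and det(UᵀAV) ≠ 0}. -/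

import Mathlib

open Matrix

/-- A square real matrix of full rank is a unit. -/
private lemma isUnit_of_rank_eq_card {k : ℕ} (M : Matrix (Fin k) (Fin k) ℝ)
    (h : M.rank = k) : IsUnit M := by
  rw [← Matrix.mulVec_surjective_iff_isUnit]
  have hrange : LinearMap.range M.mulVecLin = ⊤ := by
    apply Submodule.eq_top_of_finrank_eq
    have : Module.finrank ℝ (LinearMap.range M.mulVecLin) = M.rank := rfl
    rw [this, h, Module.finrank_pi, Fintype.card_fin]
  intro y
  obtain ⟨x, hx⟩ := LinearMap.range_eq_top.mp hrange y
  exact ⟨x, hx⟩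

/-- Gram matrix of a full-column-rank matrix is a unit. -/
private lemma isUnit_gram {k l : ℕ} (M : Matrix (Fin l) (Fin k) ℝ) (h : M.rank = k) :
    IsUnit (Mᵀ * M) := by
  apply isUnit_of_rank_eq_card
  rw [Matrix.rank_transpose_mul_self, h]

/-- Sum of the two complementary projectors equals the identity. -/
private lemma proj_sum {N k l : ℕ} (hkl : k + l = N)
    (U : Matrix (Fin N) (Fin k) ℝ) (W : Matrix (Fin N) (Fin l) ℝ)
    (hU : IsUnit ((Uᵀ * U).det)) (hW : IsUnit ((Wᵀ * W).det))
    (horth : Uᵀ * W = 0) :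
    U * (Uᵀ * U)⁻¹ * Uᵀ + W * (Wᵀ * W)⁻¹ * Wᵀ = 1 := by
  have horth' : Wᵀ * U = 0 := by
    have := congrArg Matrix.transpose horth
    rwa [Matrix.transpose_mul, Matrix.transpose_transpose, Matrix.transpose_zero] at this
  have e : Fin N ≃ Fin k ⊕ Fin l := (finCongr hkl.symm).trans finSumFinEquiv.symm
  have h1 : Matrix.fromRows ((Uᵀ * U)⁻¹ * Uᵀ) ((Wᵀ * W)⁻¹ * Wᵀ) *
      Matrix.fromCols U W = 1 := by
    rw [Matrix.fromRows_mul_fromCols]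
    have e11 : (Uᵀ * U)⁻¹ * Uᵀ * U = 1 := by
      rw [Matrix.mul_assoc, Matrix.nonsing_inv_mul _ hU]
    have e22 : (Wᵀ * W)⁻¹ * Wᵀ * W = 1 := by
      rw [Matrix.mul_assoc, Matrix.nonsing_inv_mul _ hW]
    have e12 : (Uᵀ * U)⁻¹ * Uᵀ * W = 0 := by
      rw [Matrix.mul_assoc, horth, Matrix.mul_zero]
    have e21 : (Wᵀ * W)⁻¹ * Wᵀ * U = 0 := by
      rw [Matrix.mul_assoc, horth', Matrix.mul_zero]
    rw [e11, e22, e12, e21, ← Matrix.fromBlocks_one]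
  have h2 : Matrix.fromCols U W *
      Matrix.fromRows ((Uᵀ * U)⁻¹ * Uᵀ) ((Wᵀ * W)⁻¹ * Wᵀ) = 1 :=
    (Matrix.fromCols_mul_fromRows_eq_one_comm e U W _ _).mpr h1
  rw [Matrix.fromCols_mul_fromRows] at h2
  rw [← h2, Matrix.mul_assoc, Matrix.mul_assoc]

/-- The key rank identity: if `rank A = r` and `Uᵀ A V` is invertible then
`A = A V (Uᵀ A V)⁻¹ (Uᵀ A)`. -/
private lemma key_identity {n m r : ℕ} (U : Matrix (Fin n) (Fin r) ℝ)
    (V : Matrix (Fin m) (Fin r) ℝ) (A : Matrix (Fin n) (Fin m) ℝ)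
    (hA : A.rank = r) (hdet : IsUnit (Uᵀ * A * V).det) :
    A = A * V * (Uᵀ * A * V)⁻¹ * (Uᵀ * A) := by
  have hMunit : IsUnit (Uᵀ * A * V) := (Matrix.isUnit_iff_isUnit_det _).mpr hdet
  have h1 : (Uᵀ * A).rank = r := by
    refine le_antisymm ((Matrix.rank_mul_le_right _ _).trans_eq hA) ?_
    have h2 : (Uᵀ * A * V).rank = r := by
      rw [Matrix.rank_of_isUnit _ hMunit, Fintype.card_fin]
    calc r = (Uᵀ * A * V).rank := h2.symm
      _ ≤ (Uᵀ * A).rank := Matrix.rank_mul_le_left _ _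
  set p : Submodule ℝ (Fin n → ℝ) := LinearMap.range A.mulVecLin with hp
  have hfinp : Module.finrank ℝ p = r := hA
  have hmap : p.map (Uᵀ.mulVecLin) = LinearMap.range (Uᵀ * A).mulVecLin := by
    rw [Matrix.mulVecLin_mul, LinearMap.range_comp]
  have hker : LinearMap.ker ((Uᵀ.mulVecLin).domRestrict p) = ⊥ := by
    have h3 := LinearMap.finrank_range_add_finrank_ker ((Uᵀ.mulVecLin).domRestrict p)
    rw [LinearMap.range_domRestrict, hmap] at h3
    have h4 : Module.finrank ℝ (LinearMap.range (Uᵀ * A).mulVecLin) = r := h1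
    rw [h4, hfinp] at h3
    have h5 : Module.finrank ℝ (LinearMap.ker ((Uᵀ.mulVecLin).domRestrict p)) = 0 := by omega
    exact Submodule.finrank_eq_zero.mp h5
  have hinj : ∀ x ∈ p, Uᵀ *ᵥ x = 0 → x = 0 := by
    intro x hx h0
    have hmem : (⟨x, hx⟩ : p) ∈ LinearMap.ker ((Uᵀ.mulVecLin).domRestrict p) := by
      rw [LinearMap.mem_ker, LinearMap.domRestrict_apply]
      show Uᵀ.mulVecLin x = 0
      rw [Matrix.mulVecLin_apply]
      exact h0
    rw [hker, Submodule.mem_bot] at hmem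
    simpa using congrArg Subtype.val hmem
  -- the difference matrix
  set D : Matrix (Fin m) (Fin m) ℝ := V * (Uᵀ * A * V)⁻¹ * (Uᵀ * A) - 1 with hD
  have hUG : Uᵀ * (A * D) = 0 := by
    have : Uᵀ * (A * (V * (Uᵀ * A * V)⁻¹ * (Uᵀ * A))) = Uᵀ * A := by
      have hassoc : Uᵀ * (A * (V * (Uᵀ * A * V)⁻¹ * (Uᵀ * A)))
          = (Uᵀ * A * V) * (Uᵀ * A * V)⁻¹ * (Uᵀ * A) := by
        simp only [Matrix.mul_assoc]
      rw [hassoc, Matrix.mul_nonsing_inv _ hdet, Matrix.one_mul]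
    rw [hD, Matrix.mul_sub, Matrix.mul_one, Matrix.mul_sub, this, sub_self]
  have hAD : A * D = 0 := by
    have hy : ∀ y : Fin m → ℝ, (A * D) *ᵥ y = 0 := by
      intro y
      apply hinj
      · rw [← Matrix.mulVec_mulVec]
        exact ⟨D *ᵥ y, by simp [Matrix.mulVecLin_apply]⟩
      · rw [Matrix.mulVec_mulVec, hUG, Matrix.zero_mulVec]
    ext i j
    have := congrFun (hy (Pi.single j 1)) i
    simpa [Matrix.mulVec_single] using this
  have h6 : A * (V * (Uᵀ * A * V)⁻¹ * (Uᵀ * A)) = A := by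
    have h7 := hAD
    rw [hD, Matrix.mul_sub, Matrix.mul_one, sub_eq_zero] at h7
    exact h7
  calc A = A * (V * (Uᵀ * A * V)⁻¹ * (Uᵀ * A)) := h6.symm
    _ = A * V * (Uᵀ * A * V)⁻¹ * (Uᵀ * A) := by simp only [Matrix.mul_assoc]

/-- `A` has rank `r` and `det (Uᵀ A V) ≠ 0` iff
`A = (U + U_⊥ X) H (V + V_⊥ Y)ᵀ` with `H` invertible; moreover the triple `(X, Y, H)` is
unique, given by `H = U⁺ A (V⁺)ᵀ`, `X = U_⊥⁺ A (V⁺)ᵀ H⁻¹`, `Y = V_⊥⁺ Aᵀ (U⁺)ᵀ (Hᵀ)⁻¹`. -/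
theorem stmt15 (n m r : ℕ) (hr : 0 < r) (hrn : r < n) (hrm : r < m)
    (U : Matrix (Fin n) (Fin r) ℝ) (hU : U.rank = r)
    (V : Matrix (Fin m) (Fin r) ℝ) (hV : V.rank = r)
    (Uperp : Matrix (Fin n) (Fin (n - r)) ℝ) (hUperp : Uperp.rank = n - r)
    (Vperp : Matrix (Fin m) (Fin (m - r)) ℝ) (hVperp : Vperp.rank = m - r)
    (horthU : Uᵀ * Uperp = 0) (horthV : Vᵀ * Vperp = 0)
    (A : Matrix (Fin n) (Fin m) ℝ) :
    ((A.rank = r ∧ (Uᵀ * A * V).det ≠ 0) ↔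
      ∃ (X : Matrix (Fin (n - r)) (Fin r) ℝ) (Y : Matrix (Fin (m - r)) (Fin r) ℝ)
        (H : Matrix (Fin r) (Fin r) ℝ),
        IsUnit H ∧ A = (U + Uperp * X) * H * (V + Vperp * Y)ᵀ) ∧
    (∀ (X : Matrix (Fin (n - r)) (Fin r) ℝ) (Y : Matrix (Fin (m - r)) (Fin r) ℝ)
        (H : Matrix (Fin r) (Fin r) ℝ),
      IsUnit H → A = (U + Uperp * X) * H * (V + Vperp * Y)ᵀ →
        H = (Uᵀ * U)⁻¹ * Uᵀ * A * ((Vᵀ * V)⁻¹ * Vᵀ)ᵀ ∧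
        X = (Uperpᵀ * Uperp)⁻¹ * Uperpᵀ * A * ((Vᵀ * V)⁻¹ * Vᵀ)ᵀ * H⁻¹ ∧
        Y = (Vperpᵀ * Vperp)⁻¹ * Vperpᵀ * Aᵀ * ((Uᵀ * U)⁻¹ * Uᵀ)ᵀ * (Hᵀ)⁻¹) := by
  have detUU : IsUnit (Uᵀ * U).det := (Matrix.isUnit_iff_isUnit_det _).mp (isUnit_gram U hU)
  have detVV : IsUnit (Vᵀ * V).det := (Matrix.isUnit_iff_isUnit_det _).mp (isUnit_gram V hV)
  have detPP : IsUnit (Uperpᵀ * Uperp).det :=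
    (Matrix.isUnit_iff_isUnit_det _).mp (isUnit_gram Uperp hUperp)
  have detQQ : IsUnit (Vperpᵀ * Vperp).det :=
    (Matrix.isUnit_iff_isUnit_det _).mp (isUnit_gram Vperp hVperp)
  have hUpU : Uperpᵀ * U = 0 := by
    have := congrArg Matrix.transpose horthU
    rwa [Matrix.transpose_mul, Matrix.transpose_transpose, Matrix.transpose_zero] at this
  have hVpV : Vperpᵀ * V = 0 := by
    have := congrArg Matrix.transpose horthV
    rwa [Matrix.transpose_mul, Matrix.transpose_transpose, Matrix.transpose_zero] at this
  have projU : U * (Uᵀ * U)⁻¹ * Uᵀ + Uperp * (Uperpᵀ * Uperp)⁻¹ * Uperpᵀ = 1 :=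
    proj_sum (by omega) U Uperp detUU detPP horthU
  have projV : V * (Vᵀ * V)⁻¹ * Vᵀ + Vperp * (Vperpᵀ * Vperp)⁻¹ * Vperpᵀ = 1 :=
    proj_sum (by omega) V Vperp detVV detQQ horthV
  have hVVinvT : ((Vᵀ * V)⁻¹)ᵀ = (Vᵀ * V)⁻¹ := by
    rw [Matrix.transpose_nonsing_inv, Matrix.transpose_mul, Matrix.transpose_transpose]
  have hUUinvT : ((Uᵀ * U)⁻¹)ᵀ = (Uᵀ * U)⁻¹ := by
    rw [Matrix.transpose_nonsing_inv, Matrix.transpose_mul, Matrix.transpose_transpose]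
  have hPvT : ((Vᵀ * V)⁻¹ * Vᵀ)ᵀ = V * (Vᵀ * V)⁻¹ := by
    rw [Matrix.transpose_mul, Matrix.transpose_transpose, hVVinvT]
  have hPuT : ((Uᵀ * U)⁻¹ * Uᵀ)ᵀ = U * (Uᵀ * U)⁻¹ := by
    rw [Matrix.transpose_mul, Matrix.transpose_transpose, hUUinvT]
  constructor
  · constructor
    · rintro ⟨hrank, hdet0⟩
      have hdet : IsUnit (Uᵀ * A * V).det := isUnit_iff_ne_zero.mpr hdet0
      have hdetT : IsUnit ((Uᵀ * A * V)ᵀ).det := by rw [Matrix.det_transpose]; exact hdet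
      have hkey := key_identity U V A hrank hdet
      refine ⟨(Uperpᵀ * Uperp)⁻¹ * Uperpᵀ * (A * V * (Uᵀ * A * V)⁻¹) * (Uᵀ * U),
              (Vperpᵀ * Vperp)⁻¹ * Vperpᵀ * (Aᵀ * U * ((Uᵀ * A * V)ᵀ)⁻¹) * (Vᵀ * V),
              (Uᵀ * U)⁻¹ * (Uᵀ * A * V) * (Vᵀ * V)⁻¹, ?_, ?_⟩
      · rw [Matrix.isUnit_iff_isUnit_det, Matrix.det_mul, Matrix.det_mul]
        exact ((isUnit_nonsing_inv_det _ detUU).mul hdet).mul (isUnit_nonsing_inv_det _ detVV)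
      · -- the decomposition
        have hUP : Uᵀ * (A * V * (Uᵀ * A * V)⁻¹) = 1 := by
          have h1 : Uᵀ * (A * V * (Uᵀ * A * V)⁻¹) = (Uᵀ * A * V) * (Uᵀ * A * V)⁻¹ := by
            simp only [Matrix.mul_assoc]
          rw [h1, Matrix.mul_nonsing_inv _ hdet]
        have hP : A * V * (Uᵀ * A * V)⁻¹ =
            (U + Uperp * ((Uperpᵀ * Uperp)⁻¹ * Uperpᵀ * (A * V * (Uᵀ * A * V)⁻¹) * (Uᵀ * U)))
              * (Uᵀ * U)⁻¹ := by
          calc A * V * (Uᵀ * A * V)⁻¹ = 1 * (A * V * (Uᵀ * A * V)⁻¹) := (Matrix.one_mul _).symm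
            _ = (U * (Uᵀ * U)⁻¹ * Uᵀ + Uperp * (Uperpᵀ * Uperp)⁻¹ * Uperpᵀ)
                  * (A * V * (Uᵀ * A * V)⁻¹) := by rw [projU]
            _ = (U * (Uᵀ * U)⁻¹) * (Uᵀ * (A * V * (Uᵀ * A * V)⁻¹))
                  + (Uperp * (Uperpᵀ * Uperp)⁻¹) * (Uperpᵀ * (A * V * (Uᵀ * A * V)⁻¹)) := by
                rw [Matrix.add_mul]; simp only [Matrix.mul_assoc]
            _ = U * (Uᵀ * U)⁻¹
                  + (Uperp * (Uperpᵀ * Uperp)⁻¹) * (Uperpᵀ * (A * V * (Uᵀ * A * V)⁻¹)) := by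
                rw [hUP, Matrix.mul_one]
            _ = (U + Uperp * ((Uperpᵀ * Uperp)⁻¹ * Uperpᵀ * (A * V * (Uᵀ * A * V)⁻¹) * (Uᵀ * U)))
                  * (Uᵀ * U)⁻¹ := by
                rw [Matrix.add_mul]
                congr 1
                rw [← Matrix.mul_assoc Uperp _ (Uᵀ * U),
                  Matrix.mul_nonsing_inv_cancel_right _ _ detUU]
                simp only [Matrix.mul_assoc]
        have hVQ : Vᵀ * (Aᵀ * U * ((Uᵀ * A * V)ᵀ)⁻¹) = 1 := by
          have h1 : Vᵀ * (Aᵀ * U * ((Uᵀ * A * V)ᵀ)⁻¹)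
              = (Vᵀ * Aᵀ * U) * ((Uᵀ * A * V)ᵀ)⁻¹ := by simp only [Matrix.mul_assoc]
          have h2 : Vᵀ * Aᵀ * U = (Uᵀ * A * V)ᵀ := by
            rw [Matrix.transpose_mul, Matrix.transpose_mul, Matrix.transpose_transpose,
              Matrix.mul_assoc]
          rw [h1, h2, Matrix.mul_nonsing_inv _ hdetT]
        have hQ : Aᵀ * U * ((Uᵀ * A * V)ᵀ)⁻¹ =
            (V + Vperp * ((Vperpᵀ * Vperp)⁻¹ * Vperpᵀ * (Aᵀ * U * ((Uᵀ * A * V)ᵀ)⁻¹) * (Vᵀ * V)))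
              * (Vᵀ * V)⁻¹ := by
          calc Aᵀ * U * ((Uᵀ * A * V)ᵀ)⁻¹
              = 1 * (Aᵀ * U * ((Uᵀ * A * V)ᵀ)⁻¹) := (Matrix.one_mul _).symm
            _ = (V * (Vᵀ * V)⁻¹ * Vᵀ + Vperp * (Vperpᵀ * Vperp)⁻¹ * Vperpᵀ)
                  * (Aᵀ * U * ((Uᵀ * A * V)ᵀ)⁻¹) := by rw [projV]
            _ = (V * (Vᵀ * V)⁻¹) * (Vᵀ * (Aᵀ * U * ((Uᵀ * A * V)ᵀ)⁻¹))
                  + (Vperp * (Vperpᵀ * Vperp)⁻¹) * (Vperpᵀ * (Aᵀ * U * ((Uᵀ * A * V)ᵀ)⁻¹)) := by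
                rw [Matrix.add_mul]; simp only [Matrix.mul_assoc]
            _ = V * (Vᵀ * V)⁻¹
                  + (Vperp * (Vperpᵀ * Vperp)⁻¹) * (Vperpᵀ * (Aᵀ * U * ((Uᵀ * A * V)ᵀ)⁻¹)) := by
                rw [hVQ, Matrix.mul_one]
            _ = (V + Vperp * ((Vperpᵀ * Vperp)⁻¹ * Vperpᵀ * (Aᵀ * U * ((Uᵀ * A * V)ᵀ)⁻¹)
                  * (Vᵀ * V))) * (Vᵀ * V)⁻¹ := by
                rw [Matrix.add_mul]
                congr 1
                rw [← Matrix.mul_assoc Vperp _ (Vᵀ * V),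
                  Matrix.mul_nonsing_inv_cancel_right _ _ detVV]
                simp only [Matrix.mul_assoc]
        have hQt : (Vᵀ * V)⁻¹ *
            (V + Vperp * ((Vperpᵀ * Vperp)⁻¹ * Vperpᵀ * (Aᵀ * U * ((Uᵀ * A * V)ᵀ)⁻¹)
              * (Vᵀ * V)))ᵀ = (Uᵀ * A * V)⁻¹ * (Uᵀ * A) := by
          have h := congrArg Matrix.transpose hQ
          simp only [Matrix.transpose_mul, Matrix.transpose_transpose,
            Matrix.transpose_nonsing_inv] at h ⊢
          exact h.symm
        calc A = A * V * (Uᵀ * A * V)⁻¹ * (Uᵀ * A) := hkey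
          _ = (A * V * (Uᵀ * A * V)⁻¹) * ((Uᵀ * A * V) * ((Uᵀ * A * V)⁻¹ * (Uᵀ * A))) := by
              rw [Matrix.mul_nonsing_inv_cancel_left _ _ hdet]
          _ = ((U + Uperp * ((Uperpᵀ * Uperp)⁻¹ * Uperpᵀ * (A * V * (Uᵀ * A * V)⁻¹) * (Uᵀ * U)))
                * (Uᵀ * U)⁻¹) * ((Uᵀ * A * V) * ((Vᵀ * V)⁻¹ *
                (V + Vperp * ((Vperpᵀ * Vperp)⁻¹ * Vperpᵀ * (Aᵀ * U * ((Uᵀ * A * V)ᵀ)⁻¹)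
                  * (Vᵀ * V)))ᵀ)) := by rw [← hP, hQt]
          _ = (U + Uperp * ((Uperpᵀ * Uperp)⁻¹ * Uperpᵀ * (A * V * (Uᵀ * A * V)⁻¹) * (Uᵀ * U)))
                * ((Uᵀ * U)⁻¹ * (Uᵀ * A * V) * (Vᵀ * V)⁻¹) *
                (V + Vperp * ((Vperpᵀ * Vperp)⁻¹ * Vperpᵀ * (Aᵀ * U * ((Uᵀ * A * V)ᵀ)⁻¹)
                  * (Vᵀ * V)))ᵀ := by simp only [Matrix.mul_assoc]
    · rintro ⟨X, Y, H, hH, hA⟩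
      have hdetH : IsUnit H.det := (Matrix.isUnit_iff_isUnit_det H).mp hH
      have lA : Uᵀ * (U + Uperp * X) = Uᵀ * U := by
        rw [Matrix.mul_add, ← Matrix.mul_assoc, horthU, Matrix.zero_mul, add_zero]
      have lC : (V + Vperp * Y)ᵀ * V = Vᵀ * V := by
        have l0 : Vᵀ * (V + Vperp * Y) = Vᵀ * V := by
          rw [Matrix.mul_add, ← Matrix.mul_assoc, horthV, Matrix.zero_mul, add_zero]
        have := congrArg Matrix.transpose l0
        rwa [Matrix.transpose_mul, Matrix.transpose_mul Vᵀ V, Matrix.transpose_transpose] at this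
      have hMeq : Uᵀ * A * V = (Uᵀ * U) * H * (Vᵀ * V) := by
        calc Uᵀ * A * V
            = (Uᵀ * (U + Uperp * X)) * (H * ((V + Vperp * Y)ᵀ * V)) := by
              rw [hA]; simp only [Matrix.mul_assoc]
          _ = (Uᵀ * U) * H * (Vᵀ * V) := by rw [lA, lC]; simp only [Matrix.mul_assoc]
      have hMdet : IsUnit (Uᵀ * A * V).det := by
        rw [hMeq, Matrix.det_mul, Matrix.det_mul]
        exact (detUU.mul hdetH).mul detVV
      constructor
      · refine le_antisymm ?_ ?_
        · calc A.rank ≤ ((U + Uperp * X) * H).rank := by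
                rw [hA]; exact Matrix.rank_mul_le_left _ _
            _ ≤ (U + Uperp * X).rank := Matrix.rank_mul_le_left _ _
            _ ≤ r := Matrix.rank_le_width _
        · have h2 : (Uᵀ * A * V).rank = r := by
            rw [Matrix.rank_of_isUnit _ ((Matrix.isUnit_iff_isUnit_det _).mpr hMdet),
              Fintype.card_fin]
          calc r = (Uᵀ * A * V).rank := h2.symm
            _ ≤ (Uᵀ * A).rank := Matrix.rank_mul_le_left _ _
            _ ≤ A.rank := Matrix.rank_mul_le_right _ _
      · exact hMdet.ne_zero
  · intro X Y H hH hA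
    have hdetH : IsUnit H.det := (Matrix.isUnit_iff_isUnit_det H).mp hH
    have hdetHT : IsUnit Hᵀ.det := by rw [Matrix.det_transpose]; exact hdetH
    have lA : Uᵀ * (U + Uperp * X) = Uᵀ * U := by
      rw [Matrix.mul_add, ← Matrix.mul_assoc, horthU, Matrix.zero_mul, add_zero]
    have lB : Uperpᵀ * (U + Uperp * X) = (Uperpᵀ * Uperp) * X := by
      rw [Matrix.mul_add, hUpU, zero_add, ← Matrix.mul_assoc]
    have lC : (V + Vperp * Y)ᵀ * V = Vᵀ * V := by
      have l0 : Vᵀ * (V + Vperp * Y) = Vᵀ * V := by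
        rw [Matrix.mul_add, ← Matrix.mul_assoc, horthV, Matrix.zero_mul, add_zero]
      have := congrArg Matrix.transpose l0
      rwa [Matrix.transpose_mul, Matrix.transpose_mul Vᵀ V, Matrix.transpose_transpose] at this
    have lE : Vperpᵀ * (V + Vperp * Y) = (Vperpᵀ * Vperp) * Y := by
      rw [Matrix.mul_add, hVpV, zero_add, ← Matrix.mul_assoc]
    have lF : (U + Uperp * X)ᵀ * U = Uᵀ * U := by
      have := congrArg Matrix.transpose lA
      rwa [Matrix.transpose_mul, Matrix.transpose_mul Uᵀ U, Matrix.transpose_transpose] at this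
    have hAT : Aᵀ = (V + Vperp * Y) * (Hᵀ * (U + Uperp * X)ᵀ) := by
      rw [hA, Matrix.transpose_mul, Matrix.transpose_mul ((U + Uperp * X)) H,
        Matrix.transpose_transpose]
    refine ⟨?_, ?_, ?_⟩
    · rw [hPvT, hA]
      calc H = ((Uᵀ * U)⁻¹ * (Uᵀ * (U + Uperp * X)))
            * (H * (((V + Vperp * Y)ᵀ * V) * (Vᵀ * V)⁻¹)) := by
            rw [lA, lC, Matrix.nonsing_inv_mul _ detUU, Matrix.mul_nonsing_inv _ detVV,
              Matrix.one_mul, Matrix.mul_one]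
        _ = (Uᵀ * U)⁻¹ * Uᵀ * ((U + Uperp * X) * H * (V + Vperp * Y)ᵀ) * (V * (Vᵀ * V)⁻¹) := by
            simp only [Matrix.mul_assoc]
    · rw [hPvT, hA]
      calc X = ((Uperpᵀ * Uperp)⁻¹ * (Uperpᵀ * (U + Uperp * X)))
            * (H * ((((V + Vperp * Y)ᵀ * V) * (Vᵀ * V)⁻¹) * H⁻¹)) := by
            rw [lB, Matrix.nonsing_inv_mul_cancel_left _ _ detPP, lC,
              Matrix.mul_nonsing_inv _ detVV, Matrix.one_mul,
              Matrix.mul_nonsing_inv _ hdetH, Matrix.mul_one]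
        _ = (Uperpᵀ * Uperp)⁻¹ * Uperpᵀ * ((U + Uperp * X) * H * (V + Vperp * Y)ᵀ)
              * (V * (Vᵀ * V)⁻¹) * H⁻¹ := by simp only [Matrix.mul_assoc]
    · rw [hPuT, hAT]
      calc Y = ((Vperpᵀ * Vperp)⁻¹ * (Vperpᵀ * (V + Vperp * Y)))
            * (Hᵀ * ((((U + Uperp * X)ᵀ * U) * (Uᵀ * U)⁻¹) * (Hᵀ)⁻¹)) := by
            rw [lE, Matrix.nonsing_inv_mul_cancel_left _ _ detQQ, lF,
              Matrix.mul_nonsing_inv _ detUU, Matrix.one_mul,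
              Matrix.mul_nonsing_inv _ hdetHT, Matrix.mul_one]
        _ = (Vperpᵀ * Vperp)⁻¹ * Vperpᵀ * ((V + Vperp * Y) * (Hᵀ * (U + Uperp * X)ᵀ))
              * (U * (Uᵀ * U)⁻¹) * (Hᵀ)⁻¹ := by simp only [Matrix.mul_assoc]
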